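/- arXiv:1909.03180 — 2 statements merged into one kernel-verified Lean document; each statement's English description precedes it below -/
import Mathlib

section
/- (Schwartz–Zippel with multiplicity) Let f ∈ F[x_1,...,x_n] be a nonzero polynomial of degree at most d over an arbitrary field F. Then for any finite subset U ⊆ F, the sum over a ∈ U^n of mult(f,a) is at most d·|U|^{n-1}. -/
open MvPolynomial

/-- The `i`-th Hasse derivative of a multivariate polynomial `P = Σ_m a_m x^m`. -/
noncomputable def hasseDeriv {F : Type*} [Field F] {σ : Type*} [Fintype σ] [DecidableEq σ]
    (i : σ →₀ ℕ) (P : MvPolynomial σ F) : MvPolynomial σ F :=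
  ∑ m ∈ P.support, (∏ k, Nat.choose (m k) (i k)) •
    MvPolynomial.monomial (m - i) (P.coeff m)

/-- `P` vanishes at `a` with multiplicity at least `N`: all Hasse derivatives of `P` of
weight strictly less than `N` vanish at `a`. -/
def HasMultAtLeast {F : Type*} [Field F] {σ : Type*} [Fintype σ] [DecidableEq σ]
    (P : MvPolynomial σ F) (a : σ → F) (N : ℕ) : Prop :=
  ∀ i : σ →₀ ℕ, (∑ k, i k) < N → MvPolynomial.eval a (hasseDeriv i P) = 0

/-- The multiplicity of a nonzero polynomial `P` at `a`: the largest `N` such that all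
Hasse derivatives of `P` of weight less than `N` vanish at `a`. -/
noncomputable def mult {F : Type*} [Field F] {σ : Type*} [Fintype σ] [DecidableEq σ]
    (P : MvPolynomial σ F) (a : σ → F) : ℕ :=
  sSup {N : ℕ | HasMultAtLeast P a N}

section Basic
variable {F : Type*} [Field F] {σ : Type*} [Fintype σ] [DecidableEq σ]

lemma coeff_hasseDeriv (i u : σ →₀ ℕ) (P : MvPolynomial σ F) :
    coeff u (hasseDeriv i P) = (∏ k, ((u + i) k).choose (i k)) * coeff (u + i) P := by
  classical
  rw [hasseDeriv, coeff_sum, Finset.sum_eq_single (u + i)]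
  · have hsub : u + i - i = u := by
      ext k; simp [Finsupp.tsub_apply]
    by_cases h : u + i ∈ P.support
    · rw [coeff_smul, hsub, coeff_monomial, if_pos rfl]
      exact nsmul_eq_mul _ _
    · rw [MvPolynomial.notMem_support_iff] at h
      simp [h]
  · intro m hm hne
    rw [coeff_smul, coeff_monomial]
    by_cases h2 : m - i = u
    · have : ¬ i ≤ m := by
        intro hle
        apply hne
        rw [← h2]
        ext k
        simp [Finsupp.tsub_apply, Nat.sub_add_cancel (hle k)]
      rw [Finsupp.le_iff] at this
      push_neg at this
      obtain ⟨k, _, hk⟩ := this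
      have hz : (m k).choose (i k) = 0 := Nat.choose_eq_zero_of_lt hk
      rw [if_pos h2, Finset.prod_eq_zero (Finset.mem_univ k) hz, zero_smul]
    · rw [if_neg h2, smul_zero]
  · intro h
    rw [MvPolynomial.notMem_support_iff] at h
    simp [h]

end Basic
section Comp
variable {F : Type*} [Field F] {σ : Type*} [Fintype σ] [DecidableEq σ]

lemma trinom (u i j : ℕ) :
    (u + j).choose j * ((u + i) + j).choose i = (i + j).choose i * ((u + i) + j).choose (i + j) := by
  have h := Nat.choose_mul (n := u + i + j) (k := i + j) (s := i)
    (by omega)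
  have h1 : u + i + j - i = u + j := by omega
  have h2 : i + j - i = j := by omega
  rw [h1, h2] at h
  rw [mul_comm ((u+j).choose j), mul_comm ((i+j).choose i)]
  exact h.symm

lemma hasseDeriv_comp (i j : σ →₀ ℕ) (P : MvPolynomial σ F) :
    hasseDeriv j (hasseDeriv i P) =
      (∏ k, ((i + j) k).choose (i k)) • hasseDeriv (i + j) P := by
  ext u
  rw [coeff_smul, coeff_hasseDeriv, coeff_hasseDeriv, coeff_hasseDeriv]
  have huij : u + j + i = u + (i + j) := by rw [add_assoc, add_comm j i]
  rw [huij]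
  simp only [nsmul_eq_mul]
  rw [← mul_assoc, ← mul_assoc, ← Nat.cast_mul, ← Nat.cast_mul,
    ← Finset.prod_mul_distrib, ← Finset.prod_mul_distrib]
  congr 2
  apply Finset.prod_congr rfl
  intro k _
  have := trinom (u k) (i k) (j k)
  simpa [Finsupp.add_apply, add_assoc, add_comm, add_left_comm] using this

end Comp

section Mult
variable {F : Type*} [Field F] {σ : Type*} [Fintype σ] [DecidableEq σ]
variable {f : MvPolynomial σ F} {a : σ → F} {N : ℕ}

lemma hasMultAtLeast_zero : HasMultAtLeast f a 0 := fun i hi => absurd hi (Nat.not_lt_zero _)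

lemma HasMultAtLeast.mono {M : ℕ} (h : HasMultAtLeast f a N) (hMN : M ≤ N) :
    HasMultAtLeast f a M := fun i hi => h i (lt_of_lt_of_le hi hMN)

lemma weight_eq_sum (m : σ →₀ ℕ) : (m.sum fun _ e => e) = ∑ k, m k :=
  Finsupp.sum_fintype _ _ (fun _ => rfl)

lemma not_hasMultAtLeast (hf : f ≠ 0) : ¬ HasMultAtLeast f a (f.totalDegree + 1) := by
  obtain ⟨m, hm, hm2⟩ := Finset.exists_mem_eq_sup f.support
    (support_nonempty.mpr hf) (fun s => s.sum fun _ e => e)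
  have hdeg : f.totalDegree = m.sum fun _ e => e := hm2
  have hC : hasseDeriv m f = C (coeff m f) := by
    ext u
    rw [coeff_hasseDeriv]
    rcases eq_or_ne u 0 with rfl | hu
    · simp [coeff_C]
    · have h0 : coeff (u + m) f = 0 := by
        apply coeff_eq_zero_of_totalDegree_lt
        have hss : ∑ i ∈ (u + m).support, (u + m) i = ∑ k : σ, (u + m) k :=
          Finset.sum_subset (Finset.subset_univ _)
            (fun x _ hx => Finsupp.notMem_support_iff.mp hx)
        rw [hss, hdeg, weight_eq_sum]
        have : ∑ k, (u + m) k = (∑ k, u k) + ∑ k, m k := by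
          simp [Finsupp.add_apply, Finset.sum_add_distrib]
        rw [this]
        have : 0 < ∑ k, u k := by
          rcases Finsupp.ne_iff.mp hu with ⟨k, hk⟩
          exact Finset.sum_pos' (fun _ _ => Nat.zero_le _)
            ⟨k, Finset.mem_univ k, Nat.pos_of_ne_zero (by simpa using hk)⟩
        omega
      simp [h0, coeff_C, hu.symm]
  intro h
  have hlt : (∑ k, m k) < f.totalDegree + 1 := by
    rw [← weight_eq_sum, ← hdeg]
    omega
  have := h m hlt
  rw [hC, eval_C] at this
  exact (mem_support_iff.mp hm) this

lemma mem_mult_set_le (hf : f ≠ 0) (hN : HasMultAtLeast f a N) : N ≤ f.totalDegree := by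
  by_contra h
  exact not_hasMultAtLeast hf (hN.mono (by omega))

lemma bddAbove_mult_set (hf : f ≠ 0) : BddAbove {N : ℕ | HasMultAtLeast f a N} :=
  ⟨f.totalDegree, fun _ h => mem_mult_set_le hf h⟩

lemma mult_set_nonempty : {N : ℕ | HasMultAtLeast f a N}.Nonempty :=
  ⟨0, (hasMultAtLeast_zero : HasMultAtLeast f a 0)⟩

lemma mult_le_totalDegree (hf : f ≠ 0) : mult f a ≤ f.totalDegree := by
  rw [mult]
  exact csSup_le mult_set_nonempty (fun _ h => mem_mult_set_le hf h)

lemma hasMultAtLeast_mult (hf : f ≠ 0) : HasMultAtLeast f a (mult f a) :=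
  Nat.sSup_mem mult_set_nonempty (bddAbove_mult_set hf)

lemma exists_hasseDeriv_ne_zero (hf : f ≠ 0) :
    ∃ i : σ →₀ ℕ, (∑ k, i k) ≤ mult f a ∧ eval a (hasseDeriv i f) ≠ 0 := by
  have : ¬ HasMultAtLeast f a (mult f a + 1) := by
    intro h
    have := le_csSup (bddAbove_mult_set (a := a) hf) h
    rw [show sSup {N : ℕ | HasMultAtLeast f a N} = mult f a from rfl] at this
    omega
  rw [HasMultAtLeast] at this
  push_neg at this
  obtain ⟨i, hi1, hi2⟩ := this
  exact ⟨i, by omega, hi2⟩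

lemma HasMultAtLeast.hasseDeriv_drop (h : HasMultAtLeast f a N) (i : σ →₀ ℕ) :
    HasMultAtLeast (hasseDeriv i f) a (N - ∑ k, i k) := by
  intro j hj
  rw [hasseDeriv_comp, map_nsmul]
  have hw : (∑ k, (i + j) k) = (∑ k, i k) + ∑ k, j k := by
    simp [Finsupp.add_apply, Finset.sum_add_distrib]
  rw [h (i + j) (by omega), smul_zero]

end Mult
section Univariate
variable {F : Type*} [Field F]

lemma sum_count_le {α : Type*} [DecidableEq α] (U : Finset α) (M : Multiset α) :
    ∑ b ∈ U, M.count b ≤ Multiset.card M := by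
  rw [← Multiset.toFinset_sum_count_eq]
  rw [← Finset.sum_filter_of_ne
    (fun x _ h => Multiset.mem_toFinset.mpr (Multiset.count_pos.mp (Nat.pos_of_ne_zero h)))]
  exact Finset.sum_le_sum_of_subset (fun x hx => (Finset.mem_filter.mp hx).2)

lemma sum_rootMultiplicity_le [DecidableEq F] {P : Polynomial F} (hP : P ≠ 0) (U : Finset F) :
    ∑ b ∈ U, P.rootMultiplicity b ≤ P.natDegree := by
  have h1 : ∑ b ∈ U, P.rootMultiplicity b = ∑ b ∈ U, P.roots.count b := by
    simp [Polynomial.count_roots]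
  rw [h1]
  exact le_trans (sum_count_le U P.roots) (Polynomial.card_roots' P)

lemma le_rootMultiplicity_of_hasse {P : Polynomial F} (hP : P ≠ 0) {b : F} {N : ℕ}
    (h : ∀ j < N, (Polynomial.hasseDeriv j P).eval b = 0) : N ≤ P.rootMultiplicity b := by
  rw [Polynomial.le_rootMultiplicity_iff hP]
  have hX : (Polynomial.X : Polynomial F) ^ N ∣ Polynomial.taylor b P := by
    rw [Polynomial.X_pow_dvd_iff]
    intro d hd
    rw [Polynomial.taylor_coeff]
    exact h d hd
  obtain ⟨g, hg⟩ := hX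
  refine ⟨g.comp (Polynomial.X - Polynomial.C b), ?_⟩
  have hcomp : (Polynomial.X + Polynomial.C b).comp (Polynomial.X - Polynomial.C b)
      = (Polynomial.X : Polynomial F) := by
    rw [Polynomial.add_comp, Polynomial.X_comp, Polynomial.C_comp, sub_add_cancel]
  have hPc : P = (Polynomial.taylor b P).comp (Polynomial.X - Polynomial.C b) := by
    rw [Polynomial.taylor_apply, Polynomial.comp_assoc, hcomp, Polynomial.comp_X]
  rw [hPc, hg, Polynomial.mul_comp, Polynomial.pow_comp, Polynomial.X_comp]

end Univariate
section FinSucc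
variable {F : Type*} [Field F] {n : ℕ}

lemma cons_add_cons (s t : ℕ) (m i' : Fin n →₀ ℕ) :
    (Finsupp.cons s m) + (Finsupp.cons t i') = Finsupp.cons (s + t) (m + i') := by
  ext k
  refine Fin.cases ?_ ?_ k
  · simp [Finsupp.cons_zero]
  · intro k'
    simp [Finsupp.cons_succ]

lemma finSuccEquiv_hasseDeriv_cons (i' : Fin n →₀ ℕ) (f : MvPolynomial (Fin (n+1)) F) (s : ℕ) :
    (finSuccEquiv F n (hasseDeriv (Finsupp.cons 0 i') f)).coeff s
      = hasseDeriv i' ((finSuccEquiv F n f).coeff s) := by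
  ext m
  rw [finSuccEquiv_coeff_coeff, coeff_hasseDeriv, coeff_hasseDeriv, finSuccEquiv_coeff_coeff,
    cons_add_cons]
  rw [add_zero]
  congr 1
  rw [Fin.prod_univ_succ]
  simp [Finsupp.cons_zero, Finsupp.cons_succ]

lemma finSuccEquiv_hasseDeriv_single0 (j : ℕ) (f : MvPolynomial (Fin (n+1)) F) :
    finSuccEquiv F n (hasseDeriv (Finsupp.single 0 j) f)
      = Polynomial.hasseDeriv j (finSuccEquiv F n f) := by
  have hsingle : (Finsupp.single (0 : Fin (n+1)) j) = Finsupp.cons j 0 := by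
    ext k
    refine Fin.cases ?_ ?_ k
    · simp [Finsupp.cons_zero]
    · intro k'
      simp [Finsupp.cons_succ, Finsupp.single_apply, (Fin.succ_ne_zero k').symm]
  apply Polynomial.ext
  intro s
  ext m
  rw [Polynomial.hasseDeriv_coeff, ← C_eq_coe_nat, coeff_C_mul, finSuccEquiv_coeff_coeff,
    finSuccEquiv_coeff_coeff, coeff_hasseDeriv, hsingle, cons_add_cons, add_zero,
    Fin.prod_univ_succ]
  simp [Finsupp.cons_zero, Finsupp.cons_succ]

end FinSucc
section Main
variable {F : Type*} [Field F]

lemma hasseDeriv_zero_poly {σ : Type*} [Fintype σ] [DecidableEq σ] (i : σ →₀ ℕ) :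
    hasseDeriv i (0 : MvPolynomial σ F) = 0 := by
  simp [hasseDeriv]

lemma map_hasseDeriv' {R S : Type*} [CommSemiring R] [CommSemiring S] (φ : R →+* S) (j : ℕ)
    (p : Polynomial R) :
    (Polynomial.hasseDeriv j p).map φ = Polynomial.hasseDeriv j (p.map φ) := by
  ext s
  rw [Polynomial.coeff_map, Polynomial.hasseDeriv_coeff, Polynomial.hasseDeriv_coeff,
    Polynomial.coeff_map]
  simp [map_mul]

lemma mult_fin_zero (g : MvPolynomial (Fin 0) F) (hg : g ≠ 0) (a : Fin 0 → F) :
    mult g a = 0 := by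
  have h0 : g.totalDegree = 0 := by
    obtain ⟨c, rfl⟩ := MvPolynomial.C_surjective (Fin 0) g
    exact totalDegree_C c
  have := mult_le_totalDegree hg (a := a)
  omega

end Main

/-- Schwartz–Zippel with multiplicity: for a nonzero `f ∈ F[x_1,…,x_n]` of degree at most
`d` and any finite `U ⊆ F`, `Σ_{a ∈ U^n} mult(f,a) ≤ d·|U|^{n-1}`. -/
theorem schwartz_zippel_mult {F : Type*} [Field F] [DecidableEq F] {n : ℕ}
    (f : MvPolynomial (Fin n) F) (hf : f ≠ 0) (d : ℕ) (hd : f.totalDegree ≤ d)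
    (U : Finset F) :
    ∑ a ∈ Fintype.piFinset (fun _ : Fin n => U), mult f a ≤ d * U.card ^ (n - 1) := by
  induction n generalizing d with
  | zero =>
    have h0 : ∑ a ∈ Fintype.piFinset (fun _ : Fin 0 => U), mult f a = 0 := by
      apply Finset.sum_eq_zero
      intro a _
      exact mult_fin_zero f hf a
    rw [h0]
    exact Nat.zero_le _
  | succ n ih =>
    set q := finSuccEquiv F n f with hq_def
    have hq : q ≠ 0 := by
      rw [hq_def, Ne, EmbeddingLike.map_eq_zero_iff]
      exact hf
    set t := q.natDegree with ht_def
    set ft := q.leadingCoeff with hft_def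
    have hft : ft ≠ 0 := Polynomial.leadingCoeff_ne_zero.mpr hq
    have hqt : q.coeff t = ft := Polynomial.coeff_natDegree
    have htle : ft.totalDegree + t ≤ d := by
      refine le_trans ?_ hd
      apply totalDegree_coeff_finSuccEquiv_add_le f t
      rw [← hq_def, hqt]
      exact hft
    -- key pointwise estimate
    have key : ∀ a' : Fin n → F, ∑ b ∈ U, mult f (Fin.cons b a') ≤ U.card * mult ft a' + t := by
      intro a'
      obtain ⟨i', hi'w, hi'ne⟩ := exists_hasseDeriv_ne_zero hft (a := a')
      set g := hasseDeriv (Finsupp.cons 0 i') f with hg_def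
      set P := (finSuccEquiv F n g).map (MvPolynomial.eval a') with hP_def
      have hPcoeff : ∀ s, P.coeff s = eval a' (hasseDeriv i' (q.coeff s)) := by
        intro s
        rw [hP_def, Polynomial.coeff_map, hg_def, finSuccEquiv_hasseDeriv_cons, hq_def]
      have hPt : P.coeff t ≠ 0 := by
        rw [hPcoeff, hqt]
        exact hi'ne
      have hP0 : P ≠ 0 := fun h => hPt (by rw [h, Polynomial.coeff_zero])
      have hPdeg : P.natDegree ≤ t := by
        rw [Polynomial.natDegree_le_iff_coeff_eq_zero]
        intro N hN
        rw [hPcoeff, Polynomial.coeff_eq_zero_of_natDegree_lt (by omega), hasseDeriv_zero_poly]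
        simp
      have hwt : (∑ k, (Finsupp.cons 0 i' : Fin (n+1) →₀ ℕ) k) = ∑ k, i' k := by
        rw [Fin.sum_univ_succ]
        simp [Finsupp.cons_zero, Finsupp.cons_succ]
      have hb : ∀ b ∈ U, mult f (Fin.cons b a') ≤ mult ft a' + P.rootMultiplicity b := by
        intro b _
        have hM : HasMultAtLeast f (Fin.cons b a') (mult f (Fin.cons b a')) :=
          hasMultAtLeast_mult hf
        have hg2 := hM.hasseDeriv_drop (Finsupp.cons 0 i')
        rw [hwt] at hg2
        have hroot : mult f (Fin.cons b a') - (∑ k, i' k) ≤ P.rootMultiplicity b := by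
          apply le_rootMultiplicity_of_hasse hP0
          intro j hj
          have hsw : (∑ k, (Finsupp.single (0 : Fin (n+1)) j) k) = j := by
            rw [Fin.sum_univ_succ]
            simp only [Finsupp.single_apply, if_pos rfl]
            have hz : ∀ x : Fin n, ((if (0 : Fin (n+1)) = x.succ then j else 0) : ℕ) = 0 := by
              intro x
              rw [if_neg (fun h => (Fin.succ_ne_zero x) h.symm)]
            simp [hz]
          have hzero : eval (Fin.cons b a') (hasseDeriv (Finsupp.single 0 j) g) = 0 := by
            apply hg2
            rw [hsw]
            exact hj
          calc (Polynomial.hasseDeriv j P).eval b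
              = Polynomial.eval b (Polynomial.map (MvPolynomial.eval a')
                  (Polynomial.hasseDeriv j (finSuccEquiv F n g))) := by
                rw [map_hasseDeriv', hP_def]
            _ = Polynomial.eval b (Polynomial.map (MvPolynomial.eval a')
                  (finSuccEquiv F n (hasseDeriv (Finsupp.single 0 j) g))) := by
                rw [finSuccEquiv_hasseDeriv_single0]
            _ = eval (Fin.cons b a') (hasseDeriv (Finsupp.single 0 j) g) :=
                (eval_eq_eval_mv_eval' a' b _).symm
            _ = 0 := hzero
        omega
      calc ∑ b ∈ U, mult f (Fin.cons b a')
          ≤ ∑ b ∈ U, (mult ft a' + P.rootMultiplicity b) := Finset.sum_le_sum hb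
        _ = U.card * mult ft a' + ∑ b ∈ U, P.rootMultiplicity b := by
            rw [Finset.sum_add_distrib, Finset.sum_const, smul_eq_mul]
        _ ≤ U.card * mult ft a' + t := by
            have h1 := sum_rootMultiplicity_le hP0 U
            omega
    -- reindexing
    have hre : ∑ a ∈ Fintype.piFinset (fun _ : Fin (n+1) => U), mult f a
        = ∑ a' ∈ Fintype.piFinset (fun _ : Fin n => U), ∑ b ∈ U, mult f (Fin.cons b a') := by
      rw [← Finset.sum_product']
      apply Finset.sum_bij' (fun a _ => (Fin.tail a, a 0)) (fun p _ => Fin.cons p.2 p.1)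
      · intro a ha
        rw [Finset.mem_product]
        rw [Fintype.mem_piFinset] at ha
        constructor
        · rw [Fintype.mem_piFinset]
          intro k
          exact ha k.succ
        · exact ha 0
      · intro p hp
        rw [Finset.mem_product] at hp
        rw [Fintype.mem_piFinset]
        intro k
        refine Fin.cases ?_ ?_ k
        · simpa using hp.2
        · intro k'
          rw [Fin.cons_succ]
          exact Fintype.mem_piFinset.mp hp.1 k'
      · intro a _
        exact Fin.cons_self_tail a
      · intro p _
        simp [Fin.tail_cons]
      · intro a _
        rw [Fin.cons_self_tail]
    rw [hre]
    have hIH : U.card * (∑ a' ∈ Fintype.piFinset (fun _ : Fin n => U), mult ft a')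
        ≤ (d - t) * U.card ^ n := by
      cases n with
      | zero =>
        have h0 : ∑ a' ∈ Fintype.piFinset (fun _ : Fin 0 => U), mult ft a' = 0 :=
          Finset.sum_eq_zero (fun a' _ => mult_fin_zero ft hft a')
        rw [h0]
        simp
      | succ n' =>
        have := ih ft hft (d - t) (by omega) 
        calc U.card * (∑ a' ∈ Fintype.piFinset (fun _ : Fin (n'+1) => U), mult ft a')
            ≤ U.card * ((d - t) * U.card ^ (n' + 1 - 1)) := Nat.mul_le_mul_left _ this
          _ = (d - t) * U.card ^ (n' + 1) := by
              rw [Nat.add_sub_cancel]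
              ring
    calc ∑ a' ∈ Fintype.piFinset (fun _ : Fin n => U), ∑ b ∈ U, mult f (Fin.cons b a')
        ≤ ∑ a' ∈ Fintype.piFinset (fun _ : Fin n => U), (U.card * mult ft a' + t) :=
          Finset.sum_le_sum (fun a' _ => key a')
      _ = U.card * (∑ a' ∈ Fintype.piFinset (fun _ : Fin n => U), mult ft a')
          + t * U.card ^ n := by
          rw [Finset.sum_add_distrib, Finset.sum_const, ← Finset.mul_sum, smul_eq_mul,
            Fintype.card_piFinset]
          simp [mul_comm]
      _ ≤ (d - t) * U.card ^ n + t * U.card ^ n := by omega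
      _ ≤ d * U.card ^ (n + 1 - 1) := by
          have ht_le_d : t ≤ d := by omega
          have : (d - t) * U.card ^ n + t * U.card ^ n = ((d - t) + t) * U.card ^ n := by ring
          rw [this]
          have : (d - t) + t = d := by omega
          rw [this]
          simp
end

section
/- Let F be a set of k-flats in F_q^n, exactly one parallel to each k-dimensional subspace (2 ≤ k < n), and let 1 ≤ ℓ < k. For each ℓ-dimensional subspace Λ, the set of ℓ-flats parallel to Λ that are contained in some flat of F is in bijection with a (k−ℓ, q^{k−ℓ})-Furstenberg set in a complementary subspace P_Λ ≅ F_q^{n−ℓ}; consequently the total number of ℓ-flats contained in flats of F is at least C(n,ℓ)_q · K(q, n−ℓ, k−ℓ, q^{k−ℓ}). -/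
/-- The q-binomial coefficient `C(n,k)_q = ∏_{i=0}^{k-1} (q^{n-i} - 1)/(q^{k-i} - 1)`. -/
noncomputable def qBinom (q n k : ℕ) : ℚ :=
  ∏ i ∈ Finset.range k, ((q : ℚ) ^ (n - i) - 1) / ((q : ℚ) ^ (k - i) - 1)

open Module Submodule in
private lemma translate_inj' {F : Type*} [Field F] {V : Type*} [AddCommGroup V] [Module F V]
    {Λ Λ' : Submodule F V} {w w' : V}
    (h : (fun x => w + x) '' (Λ : Set V) = (fun x => w' + x) '' (Λ' : Set V)) : Λ = Λ' := by
  have key : ∀ (Λ Λ' : Submodule F V) (w w' : V),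
      (fun x => w + x) '' (Λ : Set V) ⊆ (fun x => w' + x) '' (Λ' : Set V) → Λ ≤ Λ' := by
    intro Λ Λ' w w' hsub x hx
    have h0 : w ∈ (fun x => w' + x) '' (Λ' : Set V) := hsub ⟨0, Λ.zero_mem, by simp⟩
    have h1 : w + x ∈ (fun x => w' + x) '' (Λ' : Set V) := hsub ⟨x, hx, rfl⟩
    obtain ⟨a, ha, haw⟩ := h0
    obtain ⟨b, hb, hbw⟩ := h1
    have : x = b - a := by
      simp only at haw hbw
      rw [← haw, add_assoc] at hbw
      have hb2 := add_left_cancel hbw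
      rw [hb2]; abel
    rw [this]; exact Λ'.sub_mem hb ha
  exact le_antisymm (key _ _ _ _ h.le) (key _ _ _ _ h.ge)

open Module Submodule in
private lemma card_subspaces_mul' {F : Type*} [Field F] [Fintype F] {V : Type*} [AddCommGroup V]
    [Module F V] [Finite V] (ℓ : ℕ) (hl : ℓ ≤ finrank F V) :
    Nat.card {Λ : Submodule F V // finrank F Λ = ℓ} *
        ∏ i : Fin ℓ, (Fintype.card F ^ ℓ - Fintype.card F ^ i.val)
      = ∏ i : Fin ℓ, (Fintype.card F ^ finrank F V - Fintype.card F ^ i.val) := by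
  classical
  haveI : Finite (Submodule F V) :=
    Finite.of_injective (fun p : Submodule F V => (p : Set V)) SetLike.coe_injective
  haveI : FiniteDimensional F V := Module.Finite.of_finite
  rw [← card_linearIndependent (K := F) (V := V) hl]
  set U := {Λ : Submodule F V // finrank F Λ = ℓ} with hU
  let f : {s : Fin ℓ → V // LinearIndependent F s} → U :=
    fun s => ⟨Submodule.span F (Set.range s.1), by
      rw [finrank_span_eq_card s.2, Fintype.card_fin]⟩
  have e2 : ∀ Λ : U, {s : {s : Fin ℓ → V // LinearIndependent F s} // f s = Λ} ≃
      {t : Fin ℓ → Λ.1 // LinearIndependent F t} := by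
    intro Λ
    refine ⟨fun p => ⟨fun i => ⟨p.1.1 i, ?_⟩, ?_⟩, fun t => ⟨⟨fun i => (t.1 i : V), ?_⟩, ?_⟩, ?_, ?_⟩
    · have hsp : Submodule.span F (Set.range p.1.1) = Λ.1 := congrArg Subtype.val p.2
      exact hsp ▸ Submodule.subset_span (Set.mem_range_self i)
    · exact LinearIndependent.of_comp Λ.1.subtype p.1.2
    · exact t.2.map' Λ.1.subtype (Submodule.ker_subtype Λ.1)
    · refine Subtype.ext ?_
      show Submodule.span F (Set.range fun i => (t.1 i : V)) = Λ.1
      have hle : Submodule.span F (Set.range fun i => (t.1 i : V)) ≤ Λ.1 := by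
        rw [Submodule.span_le]; rintro x ⟨i, rfl⟩; exact (t.1 i).2
      refine Submodule.eq_of_le_of_finrank_eq hle ?_
      have h1 := finrank_span_eq_card (t.2.map' Λ.1.subtype (Submodule.ker_subtype Λ.1))
      simp only [Function.comp_def, Fintype.card_fin, Submodule.coe_subtype] at h1
      exact h1.trans Λ.2.symm
    · intro p; ext i; rfl
    · intro t; ext i; rfl
  haveI : Fintype U := Fintype.ofFinite U
  haveI : Fintype {s : Fin ℓ → V // LinearIndependent F s} := Fintype.ofFinite _
  have e1 := Equiv.sigmaFiberEquiv f
  rw [Nat.card_congr e1.symm]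
  simp only [Nat.card_eq_fintype_card]
  rw [Fintype.card_sigma]
  have : ∀ Λ : U, Fintype.card {s // f s = Λ} =
      ∏ i : Fin ℓ, (Fintype.card F ^ ℓ - Fintype.card F ^ i.val) := by
    intro Λ
    rw [← Nat.card_eq_fintype_card, Nat.card_congr (e2 Λ),
      card_linearIndependent (K := F) (V := Λ.1) (by rw [Λ.2]), Λ.2]
  rw [Finset.sum_congr rfl fun Λ _ => this Λ, Finset.sum_const, Finset.card_univ, smul_eq_mul]

private lemma qBinom_mul' (q n ℓ : ℕ) (hq : 2 ≤ q) (h : ℓ ≤ n) :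
    qBinom q n ℓ * ∏ i : Fin ℓ, ((q ^ ℓ - q ^ i.val : ℕ) : ℚ)
      = ∏ i : Fin ℓ, ((q ^ n - q ^ i.val : ℕ) : ℚ) := by
  have hq1 : (1 : ℚ) < (q : ℚ) := by exact_mod_cast hq
  rw [qBinom, Fin.prod_univ_eq_prod_range (fun i => ((q ^ ℓ - q ^ i : ℕ) : ℚ)),
    Fin.prod_univ_eq_prod_range (fun i => ((q ^ n - q ^ i : ℕ) : ℚ)), ← Finset.prod_mul_distrib]
  refine Finset.prod_congr rfl fun i hi => ?_
  have hiℓ : i < ℓ := Finset.mem_range.mp hi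
  have hpow1 : q ^ i ≤ q ^ ℓ := Nat.pow_le_pow_right (by omega) hiℓ.le
  have hpow2 : q ^ i ≤ q ^ n := Nat.pow_le_pow_right (by omega) (by omega)
  rw [Nat.cast_sub hpow1, Nat.cast_sub hpow2]
  push_cast
  have e1 : (q : ℚ) ^ n = (q : ℚ) ^ (n - i) * (q : ℚ) ^ i := by
    rw [← pow_add, Nat.sub_add_cancel (by omega)]
  have e2 : (q : ℚ) ^ ℓ = (q : ℚ) ^ (ℓ - i) * (q : ℚ) ^ i := by
    rw [← pow_add, Nat.sub_add_cancel (by omega)]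
  have hden : (q : ℚ) ^ (ℓ - i) - 1 ≠ 0 := by
    have : (1 : ℚ) < (q : ℚ) ^ (ℓ - i) := one_lt_pow₀ hq1 (by omega)
    linarith
  field_simp
  rw [e1, e2]; ring

set_option maxHeartbeats 1000000 in
set_option synthInstance.maxHeartbeats 400000 in
open Classical in
/-- If `F` is a family of `k`-flats in `F_q^n`, one (given by the translation `v W hW`)
parallel to each `k`-dimensional subspace, `2 ≤ k < n`, `1 ≤ ℓ < k`, and every
`(k−ℓ, q^{k−ℓ})`-Furstenberg set in `F_q^{n−ℓ}` has at least `c` points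
(i.e. `c ≤ K(q, n−ℓ, k−ℓ, q^{k−ℓ})`), then the number of `ℓ`-flats contained in some
flat of `F` is at least `C(n,ℓ)_q · c`. -/
theorem flats_in_furstenberg_family {F : Type*} [Field F] [Fintype F] (q n k ℓ c : ℕ)
    (hq : Fintype.card F = q) (hk : 2 ≤ k) (hkn : k < n) (hl : 1 ≤ ℓ) (hlk : ℓ < k)
    (v : ∀ W : Submodule F (Fin n → F), Module.finrank F W = k → (Fin n → F))
    (hc : ∀ T : Finset (Fin (n - ℓ) → F),
      (∀ W : Submodule F (Fin (n - ℓ) → F), Module.finrank F W = k - ℓ →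
        ∃ u : Fin (n - ℓ) → F, q ^ (k - ℓ) ≤ (T.filter (fun x => x - u ∈ W)).card) →
      c ≤ T.card) :
    qBinom q n ℓ * c ≤
      (Nat.card {s : Set (Fin n → F) //
        (∃ (Λ : Submodule F (Fin n → F)) (w : Fin n → F),
          Module.finrank F Λ = ℓ ∧ s = (fun x => w + x) '' (Λ : Set (Fin n → F))) ∧
        ∃ (W : Submodule F (Fin n → F)) (hW : Module.finrank F W = k),
          s ⊆ (fun x => v W hW + x) '' (W : Set (Fin n → F))} : ℚ) := by
  classical
  have hq2 : 2 ≤ q := hq ▸ Fintype.one_lt_card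
  have hfinV : Module.finrank F (Fin n → F) = n := Module.finrank_fin_fun F
  haveI : FiniteDimensional F (Fin n → F) := Module.Finite.of_finite
  set Sub := {s : Set (Fin n → F) //
        (∃ (Λ : Submodule F (Fin n → F)) (w : Fin n → F),
          Module.finrank F Λ = ℓ ∧ s = (fun x => w + x) '' (Λ : Set (Fin n → F))) ∧
        ∃ (W : Submodule F (Fin n → F)) (hW : Module.finrank F W = k),
          s ⊆ (fun x => v W hW + x) '' (W : Set (Fin n → F))} with hSub
  set U := {Λ : Submodule F (Fin n → F) // Module.finrank F Λ = ℓ} with hUdef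
  haveI : Finite (Submodule F (Fin n → F)) :=
    Finite.of_injective (fun p : Submodule F (Fin n → F) => (p : Set (Fin n → F)))
      SetLike.coe_injective
  haveI : Fintype U := Fintype.ofFinite U
  haveI : Finite Sub := by
    exact Finite.of_injective (fun s : Sub => s.1) Subtype.val_injective
  haveI : Fintype Sub := Fintype.ofFinite Sub
  -- the direction map
  let g : Sub → U := fun s => ⟨s.2.1.choose, s.2.1.choose_spec.choose_spec.1⟩
  have hg : ∀ (s : Sub) (Λ : Submodule F (Fin n → F)) (w : Fin n → F),
      s.1 = (fun x => w + x) '' (Λ : Set (Fin n → F)) → (g s).1 = Λ := by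
    intro s Λ w hw
    have hspec := s.2.1.choose_spec.choose_spec.2
    exact translate_inj' ((hspec.symm.trans hw))
  -- fiber bound
  have hfib : ∀ Λ : U, c ≤ Nat.card {s : Sub // g s = Λ} := by
    intro Λ
    have hQrank : Module.finrank F ((Fin n → F) ⧸ Λ.1) = n - ℓ := by
      have h2 := Submodule.finrank_quotient_add_finrank Λ.1
      rw [hfinV, Λ.2] at h2; omega
    obtain ⟨ψ⟩ := FiniteDimensional.nonempty_linearEquiv_of_finrank_eq
      (R := F) (M := (Fin n → F) ⧸ Λ.1) (M' := Fin (n - ℓ) → F)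
      (by rw [hQrank, Module.finrank_fin_fun])
    set T : Finset (Fin (n - ℓ) → F) := (Set.toFinite {x : Fin (n - ℓ) → F |
      ∃ w : Fin n → F, ψ (Λ.1.mkQ w) = x ∧
        ∃ (W : Submodule F (Fin n → F)) (hW : Module.finrank F W = k),
          ((fun y => w + y) '' (Λ.1 : Set (Fin n → F))) ⊆
            (fun y => v W hW + y) '' (W : Set (Fin n → F))}).toFinset with hTdef
    have hT : ∀ x, x ∈ T ↔ ∃ w : Fin n → F, ψ (Λ.1.mkQ w) = x ∧
        ∃ (W : Submodule F (Fin n → F)) (hW : Module.finrank F W = k),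
          ((fun y => w + y) '' (Λ.1 : Set (Fin n → F))) ⊆
            (fun y => v W hW + y) '' (W : Set (Fin n → F)) := by
      intro x; rw [hTdef, Set.Finite.mem_toFinset]; rfl
    -- Furstenberg property of T
    have hFur : ∀ W' : Submodule F (Fin (n - ℓ) → F), Module.finrank F W' = k - ℓ →
        ∃ u : Fin (n - ℓ) → F, q ^ (k - ℓ) ≤ (T.filter (fun x => x - u ∈ W')).card := by
      intro W' hW'
      set Wb : Submodule F ((Fin n → F) ⧸ Λ.1) :=
        W'.map (ψ.symm : (Fin (n - ℓ) → F) →ₗ[F] ((Fin n → F) ⧸ Λ.1)) with hWbdef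
      set W : Submodule F (Fin n → F) := Wb.comap Λ.1.mkQ with hWdef
      have hΛW : Λ.1 ≤ W := by
        intro x hx
        have : Λ.1.mkQ x = 0 := by
          rw [Submodule.mkQ_apply, Submodule.Quotient.mk_eq_zero]; exact hx
        simpa [hWdef, Submodule.mem_comap, this] using Wb.zero_mem
      have hWbrank : Module.finrank F Wb = k - ℓ := by
        rw [hWbdef, LinearEquiv.finrank_map_eq, hW']
      have hWk : Module.finrank F W = k := by
        have hrk := LinearMap.finrank_range_add_finrank_ker (Λ.1.mkQ.domRestrict W)
        rw [LinearMap.range_domRestrict, LinearMap.ker_domRestrict, Submodule.ker_mkQ] at hrk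
        rw [hWdef] at hrk
        rw [Submodule.map_comap_eq_of_surjective (Λ.1.mkQ_surjective) Wb] at hrk
        have hker : Module.finrank F (Λ.1.comap W.subtype) = ℓ := by
          rw [LinearEquiv.finrank_eq (Submodule.comapSubtypeEquivOfLe hΛW), Λ.2]
        rw [hWbrank] at hrk
        rw [← hWdef] at hrk
        rw [hker] at hrk
        omega
      refine ⟨ψ (Λ.1.mkQ (v W hWk)), ?_⟩
      set u := ψ (Λ.1.mkQ (v W hWk)) with hudef
      have hsub : ∀ x : Fin (n - ℓ) → F, x - u ∈ W' → x ∈ T := by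
        intro x hx
        obtain ⟨w, hw⟩ := Λ.1.mkQ_surjective (ψ.symm x)
        refine (hT x).2 ⟨w, by rw [hw, ψ.apply_symm_apply], W, hWk, ?_⟩
        rintro y ⟨a, ha, rfl⟩
        have hwv : w - v W hWk ∈ W := by
          have hmk : Λ.1.mkQ (w - v W hWk) = ψ.symm (x - u) := by
            rw [map_sub, hw, map_sub, hudef, ψ.symm_apply_apply]
          exact Submodule.mem_comap.mpr (hmk ▸ ⟨x - u, hx, rfl⟩)
        exact ⟨(w - v W hWk) + a, W.add_mem hwv (hΛW ha), by simp; abel⟩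
      have hfeq : T.filter (fun x => x - u ∈ W') = Finset.univ.filter (fun x => x - u ∈ W') := by
        ext x
        simp only [Finset.mem_filter, Finset.mem_univ, true_and]
        exact ⟨fun h => h.2, fun h => ⟨hsub x h, h⟩⟩
      rw [hfeq, ← Fintype.card_subtype]
      have e3 : {x : Fin (n - ℓ) → F // x - u ∈ W'} ≃ W' :=
        ⟨fun x => ⟨x.1 - u, x.2⟩, fun y => ⟨u + y.1, by simpa using y.2⟩,
          fun x => by ext; simp, fun y => by ext; simp⟩
      rw [Fintype.card_congr e3, Module.card_eq_pow_finrank (K := F) (V := W'), hq, hW']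
    have hcT := hc T hFur
    -- inject T into the fiber
    have hinj : ∃ j : {x // x ∈ T} → {s : Sub // g s = Λ}, Function.Injective j := by
      have hchoice : ∀ x : {x // x ∈ T}, ∃ w : Fin n → F, ψ (Λ.1.mkQ w) = x.1 ∧
          ∃ (W : Submodule F (Fin n → F)) (hW : Module.finrank F W = k),
            ((fun y => w + y) '' (Λ.1 : Set (Fin n → F))) ⊆
              (fun y => v W hW + y) '' (W : Set (Fin n → F)) :=
        fun x => (hT x.1).1 x.2
      choose w hw1 hw2 using hchoice
      refine ⟨fun x => ⟨⟨(fun y => w x + y) '' (Λ.1 : Set (Fin n → F)),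
        ⟨Λ.1, w x, Λ.2, rfl⟩, hw2 x⟩, Subtype.ext (hg _ Λ.1 (w x) rfl)⟩, ?_⟩
      intro x x' h
      have hsets : (fun y => w x + y) '' (Λ.1 : Set (Fin n → F)) =
          (fun y => w x' + y) '' (Λ.1 : Set (Fin n → F)) :=
        congrArg (fun z => z.1.1) h
      have hmem : w x' ∈ (fun y => w x + y) '' (Λ.1 : Set (Fin n → F)) := by
        rw [hsets]; exact ⟨0, Λ.1.zero_mem, by simp⟩
      obtain ⟨a, ha, haw⟩ := hmem
      have hmkeq : Λ.1.mkQ (w x) = Λ.1.mkQ (w x') := by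
        rw [← haw, map_add]
        have : Λ.1.mkQ a = 0 := by
          rw [Submodule.mkQ_apply, Submodule.Quotient.mk_eq_zero]; exact ha
        simp [this]
      have : x.1 = x'.1 := by rw [← hw1 x, ← hw1 x', hmkeq]
      exact Subtype.ext this
    obtain ⟨j, hj⟩ := hinj
    calc c ≤ T.card := hcT
      _ = Nat.card {x // x ∈ T} := by rw [Nat.card_eq_fintype_card, Fintype.card_coe]
      _ ≤ Nat.card {s : Sub // g s = Λ} := Nat.card_le_card_of_injective j hj
  -- decompose Sub by direction
  have hdecomp : Nat.card U * c ≤ Nat.card Sub := by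
    rw [Nat.card_congr (Equiv.sigmaFiberEquiv g).symm]
    simp only [Nat.card_eq_fintype_card]
    rw [Fintype.card_sigma]
    calc Fintype.card U * c = ∑ _Λ : U, c := by
          rw [Finset.sum_const, Finset.card_univ, smul_eq_mul]
      _ ≤ ∑ Λ : U, Fintype.card {s : Sub // g s = Λ} := by
          refine Finset.sum_le_sum fun Λ _ => ?_
          rw [← Nat.card_eq_fintype_card]; exact hfib Λ
  -- identify qBinom with Nat.card U
  have hln : ℓ ≤ n := by omega
  have hcount := card_subspaces_mul' (F := F) (V := Fin n → F) ℓ (by rw [hfinV]; exact hln)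
  rw [hfinV, hq] at hcount
  have hD : (∏ i : Fin ℓ, ((q ^ ℓ - q ^ i.val : ℕ) : ℚ)) ≠ 0 := by
    refine Finset.prod_ne_zero_iff.mpr fun i _ => ?_
    have : q ^ i.val < q ^ ℓ := Nat.pow_lt_pow_right (by omega) i.2
    have : 0 < q ^ ℓ - q ^ i.val := by omega
    positivity
  have hqB : qBinom q n ℓ = (Nat.card U : ℚ) := by
    have hcast : (Nat.card U : ℚ) * ∏ i : Fin ℓ, ((q ^ ℓ - q ^ i.val : ℕ) : ℚ)
        = ∏ i : Fin ℓ, ((q ^ n - q ^ i.val : ℕ) : ℚ) := by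
      rw [← Nat.cast_prod, ← Nat.cast_prod, ← Nat.cast_mul, hcount]
    have := qBinom_mul' q n ℓ hq2 hln
    exact mul_right_cancel₀ hD (this.trans hcast.symm)
  rw [hqB]
  calc (Nat.card U : ℚ) * c = ((Nat.card U * c : ℕ) : ℚ) := by push_cast; ring
    _ ≤ (Nat.card Sub : ℚ) := by exact_mod_cast hdecomp
end
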